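/- Let F be a tournament and let z ≥ 2 be an integer such that every tournament on z vertices contains a copy of F, while some tournament on z−1 vertices contains no copy of F. Then for every n, exo(n, F) = e(T(n, z−1)), the number of edges of the Turán graph T(n, z−1). -/

import Mathlib

/-- An oriented graph `G` contains a copy of the oriented graph `F`. -/
def Copies {α β : Type*} (F : α → α → Prop) (G : β → β → Prop) : Prop :=
  ∃ f : α → β, Function.Injective f ∧ ∀ a b, F a b → G (f a) (f b)

/-- The oriented Turán number. -/
noncomputable def exo {α : Type*} (n : ℕ) (F : α → α → Prop) : ℕ :=
  sSup {m : ℕ | ∃ G : Fin n → Fin n → Prop,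
    (∀ v, ¬ G v v) ∧ (∀ u v, G u v → ¬ G v u) ∧
    ¬ Copies F G ∧ {p : Fin n × Fin n | G p.1 p.2}.ncard = m}

/-- A tournament: an asymmetric relation where any two distinct vertices are joined. -/
def IsTournament {α : Type*} (T : α → α → Prop) : Prop :=
  (∀ u v, T u v → ¬ T v u) ∧ ∀ u v, u ≠ v → T u v ∨ T v u

/-- The number of edges of the Turán graph `T(n,k)`. -/
noncomputable def eTuran (n k : ℕ) : ℕ := (SimpleGraph.turanGraph n k).edgeSet.ncard

/-- The underlying simple graph of an oriented graph. -/
def underG {V : Type*} (G : V → V → Prop) (hi : ∀ v, ¬ G v v) : SimpleGraph V where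
  Adj u v := G u v ∨ G v u
  symm := by constructor; intro u v h; tauto
  loopless := by constructor; intro v h; rcases h with h | h <;> exact hi v h

/-- Arc count equals edge count of the underlying graph. -/
lemma arc_count {V : Type*} (G : V → V → Prop) (hi : ∀ v, ¬ G v v)
    (ha : ∀ u v, G u v → ¬ G v u) :
    {p : V × V | G p.1 p.2}.ncard = (underG G hi).edgeSet.ncard := by
  have himg : Function.uncurry Sym2.mk '' {p : V × V | G p.1 p.2} = (underG G hi).edgeSet := by
    ext e
    induction e using Sym2.ind with
    | _ a b =>
      simp only [Set.mem_image, Set.mem_setOf_eq, SimpleGraph.mem_edgeSet]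
      constructor
      · rintro ⟨⟨x, y⟩, hxy, hs⟩
        rcases Sym2.eq_iff.mp hs with ⟨rfl, rfl⟩ | ⟨rfl, rfl⟩
        · exact Or.inl hxy
        · exact Or.inr hxy
      · rintro (h | h)
        · exact ⟨(a, b), h, rfl⟩
        · exact ⟨(b, a), h, Sym2.eq_swap⟩
  rw [← himg]
  refine (Set.ncard_image_of_injOn ?_).symm
  rintro ⟨a, b⟩ hab ⟨c, d⟩ hcd hs
  simp only [Set.mem_setOf_eq] at hab hcd
  rcases Sym2.eq_iff.mp hs with ⟨rfl, rfl⟩ | ⟨rfl, rfl⟩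
  · rfl
  · exact absurd hcd (ha _ _ hab)

theorem stmt_4 {α : Type*} [Fintype α] (F : α → α → Prop) (hF : IsTournament F)
    (z : ℕ) (hz : 2 ≤ z)
    (h1 : ∀ T : Fin z → Fin z → Prop, IsTournament T → Copies F T)
    (h2 : ∃ T : Fin (z - 1) → Fin (z - 1) → Prop, IsTournament T ∧ ¬ Copies F T) :
    ∀ n : ℕ, exo n F = eTuran n (z - 1) := by
  classical
  set r := z - 1 with hr_def
  obtain ⟨T0, hT0, hT0F⟩ := h2
  have hr : 0 < r := by omega
  have hzr : z = r + 1 := by omega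
  have hT0irr : ∀ v, ¬ T0 v v := fun v h => hT0.1 v v h h
  intro n
  -- the part map
  let part : Fin n → Fin r := fun v => ⟨(v : ℕ) % r, Nat.mod_lt _ hr⟩
  -- the blow-up oriented graph
  let B : Fin n → Fin n → Prop := fun u v => T0 (part u) (part v)
  have hBirr : ∀ v, ¬ B v v := fun v h => hT0irr _ h
  have hBasym : ∀ u v, B u v → ¬ B v u := fun u v h h' => hT0.1 _ _ h h'
  have hBfree : ¬ Copies F B := by
    rintro ⟨f, hfinj, hfcop⟩
    refine hT0F ⟨fun a => part (f a), ?_, fun a b hab => hfcop a b hab⟩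
    intro a b hgab
    simp only at hgab
    by_contra hab
    rcases hF.2 a b hab with h | h
    · have := hfcop a b h
      rw [show B (f a) (f b) = T0 (part (f a)) (part (f b)) from rfl, hgab] at this
      exact hT0irr _ this
    · have := hfcop b a h
      rw [show B (f b) (f a) = T0 (part (f b)) (part (f a)) from rfl, hgab] at this
      exact hT0irr _ this
  have hBund : underG B hBirr = SimpleGraph.turanGraph n r := by
    ext u v
    show (B u v ∨ B v u) ↔ (u : ℕ) % r ≠ (v : ℕ) % r
    constructor
    · rintro (h | h) hmod
      · have hpe : part u = part v := Fin.ext hmod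
        rw [show B u v = T0 (part u) (part v) from rfl, hpe] at h
        exact hT0irr _ h
      · have hpe : part u = part v := Fin.ext hmod
        rw [show B v u = T0 (part v) (part u) from rfl, hpe] at h
        exact hT0irr _ h
    · intro hmod
      have : part u ≠ part v := fun h => hmod (congrArg Fin.val h)
      exact hT0.2 _ _ this
  have hBcard : {p : Fin n × Fin n | B p.1 p.2}.ncard = eTuran n r := by
    rw [arc_count B hBirr hBasym, hBund]; rfl
  -- membership of eTuran n r in the exo set
  have hmem : eTuran n r ∈ {m : ℕ | ∃ G : Fin n → Fin n → Prop,
      (∀ v, ¬ G v v) ∧ (∀ u v, G u v → ¬ G v u) ∧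
      ¬ Copies F G ∧ {p : Fin n × Fin n | G p.1 p.2}.ncard = m} :=
    ⟨B, hBirr, hBasym, hBfree, hBcard⟩
  -- upper bound
  have hub : ∀ m ∈ {m : ℕ | ∃ G : Fin n → Fin n → Prop,
      (∀ v, ¬ G v v) ∧ (∀ u v, G u v → ¬ G v u) ∧
      ¬ Copies F G ∧ {p : Fin n × Fin n | G p.1 p.2}.ncard = m}, m ≤ eTuran n r := by
    rintro m ⟨G, hGirr, hGasym, hGfree, rfl⟩
    have hcf : (underG G hGirr).CliqueFree z := by
      intro s hs
      obtain ⟨hclique, hcard⟩ := hs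
      let e : s ≃ Fin z := s.equivFinOfCardEq hcard
      refine hGfree ?_
      -- a clique of size z gives a tournament on Fin z
      let T : Fin z → Fin z → Prop := fun i j => G (e.symm i) (e.symm j)
      have hT : IsTournament T := by
        constructor
        · exact fun i j h h' => hGasym _ _ h h'
        · intro i j hij
          have hne : ((e.symm i : s) : Fin n) ≠ ((e.symm j : s) : Fin n) := by
            intro h
            exact hij (e.symm.injective (Subtype.ext h))
          exact hclique (e.symm i).2 (e.symm j).2 hne
      obtain ⟨f, hfinj, hfcop⟩ := h1 T hT
      exact ⟨fun a => (e.symm (f a) : Fin n),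
        fun a b h => hfinj (e.symm.injective (Subtype.ext h)),
        fun a b hab => hfcop a b hab⟩
    rw [hzr] at hcf
    have htm := SimpleGraph.isTuranMaximal_turanGraph (n := n) hr
    have hle := htm.2 (G' := underG G hGirr) hcf
    rw [arc_count G hGirr hGasym]
    show (underG G hGirr).edgeSet.ncard ≤ eTuran n r
    rw [eTuran, ← SimpleGraph.coe_edgeFinset, ← SimpleGraph.coe_edgeFinset,
      Set.ncard_coe_finset, Set.ncard_coe_finset]
    exact hle
  exact le_antisymm (csSup_le ⟨_, hmem⟩ hub) (le_csSup ⟨_, hub⟩ hmem)
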